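/- Suppose that for every w, P_{Z^n}[|gen(w,Z^n)| > ε] ≤ 2·exp(−nε²/(2σ²)), and that P_{WZ^n} ≪ P_W × P_{Z^n} with information density ı. Then for every γ ∈ ℝ and ε > 0: P_{WZ^n}[|gen(W,Z^n)| > ε] ≤ P_{WZ^n}[ı(W,Z^n) ≥ γ] + 2·exp(γ − nε²/(2σ²)). Consequently, for δ ∈ (0,1) and any γ with P_{WZ^n}[ı(W,Z^n) ≥ γ] < δ, with probability at least 1−δ under P_{WZ^n}: |gen(W,Z^n)| ≤ √((2σ²/n)(γ + log(2/(δ − P_{WZ^n}[ı(W,Z^n) ≥ γ])))). -/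

import Mathlib

open MeasureTheory Real

/-- Theorem 2 (strong-converse-based single-draw bound): if for every `w`,
`P_{Z^n}[|gen(w,Z^n)| > ε] ≤ 2 exp(-nε²/(2σ²))` and `P_{WZ^n} ≪ P_W × P_{Z^n}` with
information density `ı`, then for every `γ` and `ε > 0`,
`P_{WZ^n}[|gen| > ε] ≤ P_{WZ^n}[ı ≥ γ] + 2 exp(γ - nε²/(2σ²))`; consequently, for
`δ ∈ (0,1)` and any `γ` with `P_{WZ^n}[ı ≥ γ] < δ`, with probability at least `1 - δ`,
`|gen(W,Z^n)| ≤ √((2σ²/n)(γ + log(2/(δ - P_{WZ^n}[ı ≥ γ]))))`. -/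
theorem strong_converse_generalization_bound {𝒲 𝒵 : Type*} [MeasurableSpace 𝒲]
    [MeasurableSpace 𝒵] (μ : Measure (𝒲 × 𝒵)) [IsProbabilityMeasure μ]
    (σ : ℝ) (hσ : 0 < σ) (n : ℕ) (hn : 1 ≤ n)
    (μW : Measure 𝒲) (μZ : Measure 𝒵) (hμW : μW = μ.map Prod.fst) (hμZ : μZ = μ.map Prod.snd)
    (hac : μ ≪ μW.prod μZ)
    (gen : 𝒲 × 𝒵 → ℝ) (hgen : Measurable gen)
    (i : 𝒲 × 𝒵 → ℝ) (hi : i = fun p => Real.log ((μ.rnDeriv (μW.prod μZ) p).toReal))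
    (htail : ∀ w : 𝒲, ∀ ε : ℝ, 0 < ε →
      μZ {z | ε < |gen (w, z)|} ≤ ENNReal.ofReal (2 * Real.exp (-n * ε ^ 2 / (2 * σ ^ 2)))) :
    (∀ γ ε : ℝ, 0 < ε →
      μ {p | ε < |gen p|} ≤ μ {p | γ ≤ i p}
        + ENNReal.ofReal (2 * Real.exp (γ - n * ε ^ 2 / (2 * σ ^ 2))))
    ∧ (∀ δ γ : ℝ, δ ∈ Set.Ioo (0 : ℝ) 1 → (μ {p | γ ≤ i p}).toReal < δ →
        ENNReal.ofReal (1 - δ) ≤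
          μ {p | |gen p| ≤ Real.sqrt ((2 * σ ^ 2 / n)
            * (γ + Real.log (2 / (δ - (μ {p' | γ ≤ i p'}).toReal))))}) := by
  have hW : IsProbabilityMeasure μW := hμW ▸ Measure.isProbabilityMeasure_map measurable_fst.aemeasurable
  have hZ : IsProbabilityMeasure μZ := hμZ ▸ Measure.isProbabilityMeasure_map measurable_snd.aemeasurable
  set ν := μW.prod μZ with hν
  have hmi : Measurable i := by
    rw [hi]; exact Real.measurable_log.comp (μ.measurable_rnDeriv ν).ennreal_toReal
  have hwd : ν.withDensity (μ.rnDeriv ν) = μ := Measure.withDensity_rnDeriv_eq μ ν hac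
  -- key lemma
  have hkey : ∀ γ : ℝ, ∀ S : Set (𝒲 × 𝒵), MeasurableSet S →
      μ (S ∩ {p | i p < γ}) ≤ ENNReal.ofReal (Real.exp γ) * ν S := by
    intro γ S hS
    have hSi : MeasurableSet (S ∩ {p | i p < γ}) :=
      hS.inter (measurableSet_lt hmi measurable_const)
    rw [← Measure.setLIntegral_rnDeriv hac (S ∩ {p | i p < γ})]
    have hae : ∀ᵐ p ∂ν, p ∈ S ∩ {p | i p < γ} → μ.rnDeriv ν p ≤ ENNReal.ofReal (Real.exp γ) := by
      filter_upwards [μ.rnDeriv_lt_top ν] with p hlt hp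
      have hip : Real.log ((μ.rnDeriv ν p).toReal) < γ := by
        have := hp.2; rwa [hi] at this
      have hx : (μ.rnDeriv ν p).toReal < Real.exp γ := by
        rcases le_or_gt (μ.rnDeriv ν p).toReal 0 with h | h
        · exact lt_of_le_of_lt h (Real.exp_pos γ)
        · calc (μ.rnDeriv ν p).toReal = Real.exp (Real.log ((μ.rnDeriv ν p).toReal)) :=
              (Real.exp_log h).symm
          _ < Real.exp γ := Real.exp_lt_exp.2 hip
      rw [← ENNReal.ofReal_toReal hlt.ne]
      exact ENNReal.ofReal_le_ofReal hx.le
    calc ∫⁻ p in S ∩ {p | i p < γ}, μ.rnDeriv ν p ∂ν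
        ≤ ∫⁻ _ in S ∩ {p | i p < γ}, ENNReal.ofReal (Real.exp γ) ∂ν := by
          exact setLIntegral_mono_ae aemeasurable_const hae
      _ = ENNReal.ofReal (Real.exp γ) * ν (S ∩ {p | i p < γ}) := by
          rw [setLIntegral_const]
      _ ≤ ENNReal.ofReal (Real.exp γ) * ν S :=
          mul_le_mul_right (measure_mono Set.inter_subset_left) _
  -- the tail bound for ν
  have hνtail : ∀ ε : ℝ, 0 < ε →
      ν {p | ε < |gen p|} ≤ ENNReal.ofReal (2 * Real.exp (-n * ε ^ 2 / (2 * σ ^ 2))) := by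
    intro ε hε
    have hA : MeasurableSet {p : 𝒲 × 𝒵 | ε < |gen p|} :=
      measurableSet_lt measurable_const hgen.abs
    rw [hν, Measure.prod_apply hA]
    calc ∫⁻ w, μZ (Prod.mk w ⁻¹' {p | ε < |gen p|}) ∂μW
        ≤ ∫⁻ _, ENNReal.ofReal (2 * Real.exp (-n * ε ^ 2 / (2 * σ ^ 2))) ∂μW := by
          refine lintegral_mono fun w => ?_
          exact htail w ε hε
      _ = ENNReal.ofReal (2 * Real.exp (-n * ε ^ 2 / (2 * σ ^ 2))) := by
          simp
  -- part 1
  have part1 : ∀ γ ε : ℝ, 0 < ε →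
      μ {p | ε < |gen p|} ≤ μ {p | γ ≤ i p}
        + ENNReal.ofReal (2 * Real.exp (γ - n * ε ^ 2 / (2 * σ ^ 2))) := by
    intro γ ε hε
    have hA : MeasurableSet {p : 𝒲 × 𝒵 | ε < |gen p|} :=
      measurableSet_lt measurable_const hgen.abs
    have hsplit : μ {p | ε < |gen p|} ≤
        μ {p | γ ≤ i p} + μ ({p | ε < |gen p|} ∩ {p | i p < γ}) := by
      calc μ {p | ε < |gen p|}
          ≤ μ ({p | γ ≤ i p} ∪ ({p | ε < |gen p|} ∩ {p | i p < γ})) := by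
            refine measure_mono fun p hp => ?_
            rcases le_or_gt γ (i p) with h | h
            · exact Or.inl h
            · exact Or.inr ⟨hp, h⟩
        _ ≤ _ := measure_union_le _ _
    refine hsplit.trans (add_le_add_right ?_ _)
    calc μ ({p | ε < |gen p|} ∩ {p | i p < γ})
        ≤ ENNReal.ofReal (Real.exp γ) * ν {p | ε < |gen p|} := hkey γ _ hA
      _ ≤ ENNReal.ofReal (Real.exp γ) *
            ENNReal.ofReal (2 * Real.exp (-n * ε ^ 2 / (2 * σ ^ 2))) :=
          mul_le_mul_right (hνtail ε hε) _
      _ = ENNReal.ofReal (2 * Real.exp (γ - n * ε ^ 2 / (2 * σ ^ 2))) := by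
          rw [← ENNReal.ofReal_mul (Real.exp_pos γ).le]
          congr 1
          rw [Real.exp_sub]
          have : -(n : ℝ) * ε ^ 2 / (2 * σ ^ 2) = -(n * ε ^ 2 / (2 * σ ^ 2)) := by ring
          rw [this, Real.exp_neg]
          ring
  refine ⟨part1, ?_⟩
  -- part 2
  intro δ γ hδ ha
  set a := (μ {p | γ ≤ i p}).toReal with hadef
  have ha0 : 0 ≤ a := ENNReal.toReal_nonneg
  have hδ' : 0 < δ - a := sub_pos.2 ha
  set L := Real.log (2 / (δ - a)) with hL
  -- exp γ ≥ 1 - a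
  have hcompl : μ {p | i p < γ} ≤ ENNReal.ofReal (Real.exp γ) := by
    have := hkey γ Set.univ MeasurableSet.univ
    simpa using this
  have hone : (1 : ℝ) ≤ a + Real.exp γ := by
    have hsum : (1 : ENNReal) ≤ μ {p | γ ≤ i p} + μ {p | i p < γ} := by
      have : (Set.univ : Set (𝒲 × 𝒵)) ⊆ {p | γ ≤ i p} ∪ {p | i p < γ} := by
        intro p _; rcases le_or_gt γ (i p) with h | h
        · exact Or.inl h
        · exact Or.inr h
      calc (1 : ENNReal) = μ Set.univ := (measure_univ).symm
        _ ≤ μ ({p | γ ≤ i p} ∪ {p | i p < γ}) := measure_mono this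
        _ ≤ _ := measure_union_le _ _
    have h2 : (1 : ENNReal) ≤ μ {p | γ ≤ i p} + ENNReal.ofReal (Real.exp γ) :=
      hsum.trans (add_le_add_right hcompl _)
    have hfin : μ {p | γ ≤ i p} ≠ ⊤ := measure_ne_top μ _
    have hne : μ {p | γ ≤ i p} + ENNReal.ofReal (Real.exp γ) ≠ ⊤ :=
      ENNReal.add_ne_top.2 ⟨hfin, ENNReal.ofReal_ne_top⟩
    have h3 := (ENNReal.toReal_le_toReal (by simp) hne).2 h2
    rw [ENNReal.toReal_add hfin ENNReal.ofReal_ne_top, ENNReal.toReal_one,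
      ENNReal.toReal_ofReal (Real.exp_pos γ).le] at h3
    exact h3
  -- positivity of γ + L
  have harg : 0 < γ + L := by
    have hgt : (1 : ℝ) < Real.exp (γ + L) := by
      rw [Real.exp_add, hL, Real.exp_log (by positivity)]
      have h1a : 1 - a ≤ Real.exp γ := by linarith
      have h1a0 : 0 < 1 - a := by
        have : a < 1 := lt_trans ha hδ.2
        linarith
      calc (1 : ℝ) < (1 - a) * (2 / (δ - a)) := by
            have hrw : (1 - a) * (2 / (δ - a)) = 2 * (1 - a) / (δ - a) := by ring
            rw [hrw, lt_div_iff₀ hδ']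
            nlinarith [hδ.2]
        _ ≤ Real.exp γ * (2 / (δ - a)) := by
            apply mul_le_mul_of_nonneg_right h1a
            positivity
    by_contra h
    push_neg at h
    have : Real.exp (γ + L) ≤ 1 := by
      calc Real.exp (γ + L) ≤ Real.exp 0 := Real.exp_le_exp.2 h
        _ = 1 := Real.exp_zero
    linarith
  set ε := Real.sqrt ((2 * σ ^ 2 / n) * (γ + L)) with hεdef
  have hn0 : (0 : ℝ) < n := by exact_mod_cast hn
  have hargfull : 0 < (2 * σ ^ 2 / n) * (γ + L) := by positivity
  have hε : 0 < ε := Real.sqrt_pos.2 hargfull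
  have hε2 : (n : ℝ) * ε ^ 2 / (2 * σ ^ 2) = γ + L := by
    rw [hεdef, Real.sq_sqrt hargfull.le]
    field_simp
  have hbound := part1 γ ε hε
  rw [hε2] at hbound
  have hexp : 2 * Real.exp (γ - (γ + L)) = δ - a := by
    have : γ - (γ + L) = -L := by ring
    rw [this, hL, Real.exp_neg, Real.exp_log (by positivity)]
    field_simp
  rw [hexp] at hbound
  have hbound2 : μ {p | ε < |gen p|} ≤ ENNReal.ofReal δ := by
    refine hbound.trans ?_
    rw [← ENNReal.ofReal_toReal (measure_ne_top μ {p | γ ≤ i p}), ← hadef,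
      ← ENNReal.ofReal_add ha0 hδ'.le]
    simp
  have hA : MeasurableSet {p : 𝒲 × 𝒵 | ε < |gen p|} :=
    measurableSet_lt measurable_const hgen.abs
  have hcomp : {p : 𝒲 × 𝒵 | |gen p| ≤ ε} = {p | ε < |gen p|}ᶜ := by
    ext p; simp [not_lt]
  have hfinal : ENNReal.ofReal (1 - δ) ≤ μ {p | |gen p| ≤ ε} := by
    rw [hcomp, measure_compl hA (measure_ne_top μ _)]
    calc ENNReal.ofReal (1 - δ) = 1 - ENNReal.ofReal δ := by
          rw [← ENNReal.ofReal_one, ← ENNReal.ofReal_sub _ hδ.1.le]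
      _ ≤ μ Set.univ - μ {p | ε < |gen p|} := by
          rw [measure_univ]
          exact tsub_le_tsub le_rfl hbound2
  exact hfinal
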